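/- Randomization scaling lemma: Let S and U be jointly distributed random variables taking values in finite sets 𝒮 and 𝒰, let α ∈ [0,1], let B be a Bernoulli random variable with P(B=1)=α that is independent of the pair (S,U), and let c be a symbol not belonging to 𝒰. Define U' = U if B=1 and U' = c if B=0. Then I(S;U') = α·I(S;U). -/
import Mathlib


open MeasureTheory ProbabilityTheory

/-- Shannon entropy (base 2) of a random variable with values in a finite type,
with the convention `0 · log₂ 0 = 0`. -/
noncomputable def ent {Ω α : Type*} [MeasurableSpace Ω] [Fintype α]
    (μ : Measure Ω) (X : Ω → α) : ℝ :=
  ∑ a : α, -((μ (X ⁻¹' {a})).toReal * Real.logb 2 ((μ (X ⁻¹' {a})).toReal))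

/-- Conditional Shannon entropy `H(X | Y)` (base 2). -/
noncomputable def condEnt {Ω α β : Type*} [MeasurableSpace Ω] [Fintype α] [Fintype β]
    (μ : Measure Ω) (X : Ω → α) (Y : Ω → β) : ℝ :=
  ent μ (fun ω => (X ω, Y ω)) - ent μ Y

/-- Mutual information `I(X ; Y)` (base 2). -/
noncomputable def mutInf {Ω α β : Type*} [MeasurableSpace Ω] [Fintype α] [Fintype β]
    (μ : Measure Ω) (X : Ω → α) (Y : Ω → β) : ℝ :=
  ent μ X + ent μ Y - ent μ (fun ω => (X ω, Y ω))

/-- Conditional mutual information `I(X ; Y | Z)` (base 2). -/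
noncomputable def condMutInf {Ω α β γ : Type*} [MeasurableSpace Ω] [Fintype α] [Fintype β]
    [Fintype γ] (μ : Measure Ω) (X : Ω → α) (Y : Ω → β) (Z : Ω → γ) : ℝ :=
  ent μ (fun ω => (X ω, Z ω)) + ent μ (fun ω => (Y ω, Z ω))
    - ent μ (fun ω => (X ω, Y ω, Z ω)) - ent μ Z

lemma phi_mul (a b : ℝ) : (a * b) * Real.logb 2 (a * b)
    = (a * b) * Real.logb 2 a + (a * b) * Real.logb 2 b := by
  rcases eq_or_ne a 0 with h | h
  · simp [h]
  rcases eq_or_ne b 0 with h' | h'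
  · simp [h']
  rw [Real.logb_mul h h']; ring

lemma sum_toReal_preimage {Ω β : Type*} [MeasurableSpace Ω] (μ : Measure Ω)
    [IsProbabilityMeasure μ] [Fintype β] [MeasurableSpace β] [MeasurableSingletonClass β]
    (X : Ω → β) (hX : Measurable X) :
    ∑ b : β, (μ (X ⁻¹' {b})).toReal = 1 := by
  rw [← ENNReal.toReal_sum (fun b _ => measure_ne_top μ _)]
  rw [sum_measure_preimage_singleton Finset.univ
    (fun y _ => hX (measurableSet_singleton y))]
  simp

/-- **Randomization scaling lemma.** Let `S` and `U` be jointly distributed random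
variables with values in finite sets `𝒮` and `𝒰`, let `α ∈ [0,1]`, and let `B` be a
Bernoulli random variable with `P(B = 1) = α` independent of the pair `(S, U)`.
Defining `U' = U` if `B = 1` and `U' = c` if `B = 0`, where `c` is a symbol not in `𝒰`
(modelled as `none : Option 𝒰`, with `U` embedded via `some`), we get
`I(S ; U') = α · I(S ; U)`. -/
theorem randomization_scaling_lemma
    {Ω 𝒮 𝒰 : Type} [MeasurableSpace Ω] (μ : Measure Ω) [IsProbabilityMeasure μ]
    [Fintype 𝒮] [MeasurableSpace 𝒮] [MeasurableSingletonClass 𝒮]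
    [Fintype 𝒰] [MeasurableSpace 𝒰] [MeasurableSingletonClass 𝒰]
    (S : Ω → 𝒮) (U : Ω → 𝒰) (B : Ω → Bool)
    (hS : Measurable S) (hU : Measurable U) (hB : Measurable B)
    (α : ℝ) (hα0 : 0 ≤ α) (hα1 : α ≤ 1)
    (hBern : (μ (B ⁻¹' {true})).toReal = α)
    (hInd : IndepFun B (fun ω => (S ω, U ω)) μ) :
    mutInf μ S (fun ω => if B ω then (some (U ω) : Option 𝒰) else none) =
      α * mutInf μ S U := by
  set L := Real.logb 2 with hL
  set U' : Ω → Option 𝒰 := fun ω => if B ω then some (U ω) else none with hU'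
  -- independence of B with U and with S
  have hIndU : IndepFun B U μ := hInd.comp measurable_id measurable_snd
  have hIndS : IndepFun B S μ := hInd.comp measurable_id measurable_fst
  -- measure of B = false
  have hfalse : (μ (B ⁻¹' {false})).toReal = 1 - α := by
    have hc : B ⁻¹' {false} = (B ⁻¹' {true})ᶜ := by
      ext ω; cases h : B ω <;> simp [h]
    rw [hc, measure_compl (hB (measurableSet_singleton _)) (measure_ne_top μ _),
      measure_univ, ENNReal.toReal_sub_of_le prob_le_one (by simp)]
    simp [hBern]
  -- preimage computations for U'
  have hUnone : (μ (U' ⁻¹' {none})).toReal = 1 - α := by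
    have : U' ⁻¹' {none} = B ⁻¹' {false} := by
      ext ω; cases h : B ω <;> simp [hU', h]
    rw [this, hfalse]
  have hUsome : ∀ u, (μ (U' ⁻¹' {some u})).toReal = α * (μ (U ⁻¹' {u})).toReal := by
    intro u
    have hset : U' ⁻¹' {some u} = B ⁻¹' {true} ∩ U ⁻¹' {u} := by
      ext ω; cases h : B ω <;> simp [hU', h]
    rw [hset, hIndU.measure_inter_preimage_eq_mul _ _ (measurableSet_singleton _)
      (measurableSet_singleton _), ENNReal.toReal_mul, hBern]
  -- preimage computations for (S, U')
  have hPnone : ∀ s, (μ ((fun ω => (S ω, U' ω)) ⁻¹' {(s, none)})).toReal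
      = (1 - α) * (μ (S ⁻¹' {s})).toReal := by
    intro s
    have hset : (fun ω => (S ω, U' ω)) ⁻¹' {(s, (none : Option 𝒰))}
        = B ⁻¹' {false} ∩ S ⁻¹' {s} := by
      ext ω; cases h : B ω <;> simp [hU', h, Prod.ext_iff, and_comm]
    rw [hset, hIndS.measure_inter_preimage_eq_mul _ _ (measurableSet_singleton _)
      (measurableSet_singleton _), ENNReal.toReal_mul, hfalse]
  have hPsome : ∀ s u, (μ ((fun ω => (S ω, U' ω)) ⁻¹' {(s, some u)})).toReal
      = α * (μ ((fun ω => (S ω, U ω)) ⁻¹' {(s, u)})).toReal := by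
    intro s u
    have hset : (fun ω => (S ω, U' ω)) ⁻¹' {(s, some u)}
        = B ⁻¹' {true} ∩ (fun ω => (S ω, U ω)) ⁻¹' {(s, u)} := by
      ext ω; cases h : B ω <;> simp [hU', h, Prod.ext_iff, and_comm]
    rw [hset, hInd.measure_inter_preimage_eq_mul _ _ (measurableSet_singleton _)
      (measurableSet_singleton _), ENNReal.toReal_mul, hBern]
  -- sum-to-one facts
  have hsumU : ∑ u : 𝒰, (μ (U ⁻¹' {u})).toReal = 1 := sum_toReal_preimage μ U hU
  have hsumS : ∑ s : 𝒮, (μ (S ⁻¹' {s})).toReal = 1 := sum_toReal_preimage μ S hS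
  have hsumSU : ∑ p : 𝒮 × 𝒰, (μ ((fun ω => (S ω, U ω)) ⁻¹' {p})).toReal = 1 :=
    sum_toReal_preimage μ _ (hS.prodMk hU)
  -- entropy of U'
  have e1 : ent μ U' = α * ent μ U - α * L α - (1 - α) * L (1 - α) := by
    rw [ent, Fintype.sum_option, hUnone]
    have : ∀ u : 𝒰, -((μ (U' ⁻¹' {some u})).toReal * L ((μ (U' ⁻¹' {some u})).toReal))
        = α * -((μ (U ⁻¹' {u})).toReal * L ((μ (U ⁻¹' {u})).toReal))
          + (μ (U ⁻¹' {u})).toReal * (-(α * L α)) := by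
      intro u
      rw [hUsome u]
      have := phi_mul α ((μ (U ⁻¹' {u})).toReal)
      rw [hL]; linarith [this]
    rw [Finset.sum_congr rfl (fun u _ => this u), Finset.sum_add_distrib,
      ← Finset.sum_mul, ← Finset.mul_sum, hsumU]
    have : ent μ U = ∑ u : 𝒰, -((μ (U ⁻¹' {u})).toReal * L ((μ (U ⁻¹' {u})).toReal)) := rfl
    rw [← this]; ring
  -- entropy of (S, U')
  have e2 : ent μ (fun ω => (S ω, U' ω))
      = α * ent μ (fun ω => (S ω, U ω)) + (1 - α) * ent μ S
        - α * L α - (1 - α) * L (1 - α) := by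
    rw [ent, Fintype.sum_prod_type]
    have hinner : ∀ s : 𝒮,
        (∑ o : Option 𝒰, -((μ ((fun ω => (S ω, U' ω)) ⁻¹' {(s, o)})).toReal
            * L ((μ ((fun ω => (S ω, U' ω)) ⁻¹' {(s, o)})).toReal)))
        = (1 - α) * -((μ (S ⁻¹' {s})).toReal * L ((μ (S ⁻¹' {s})).toReal))
          + (μ (S ⁻¹' {s})).toReal * (-((1 - α) * L (1 - α)))
          + ∑ u : 𝒰,
            (α * -((μ ((fun ω => (S ω, U ω)) ⁻¹' {(s, u)})).toReal
                * L ((μ ((fun ω => (S ω, U ω)) ⁻¹' {(s, u)})).toReal))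
              + (μ ((fun ω => (S ω, U ω)) ⁻¹' {(s, u)})).toReal * (-(α * L α))) := by
      intro s
      rw [Fintype.sum_option, hPnone s]
      have h1 : -((1 - α) * (μ (S ⁻¹' {s})).toReal
            * L ((1 - α) * (μ (S ⁻¹' {s})).toReal))
          = (1 - α) * -((μ (S ⁻¹' {s})).toReal * L ((μ (S ⁻¹' {s})).toReal))
            + (μ (S ⁻¹' {s})).toReal * (-((1 - α) * L (1 - α))) := by
        have := phi_mul (1 - α) ((μ (S ⁻¹' {s})).toReal)
        rw [hL]; linarith [this]
      rw [h1]
      have h2 : ∀ u : 𝒰,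
          -((μ ((fun ω => (S ω, U' ω)) ⁻¹' {(s, some u)})).toReal
            * L ((μ ((fun ω => (S ω, U' ω)) ⁻¹' {(s, some u)})).toReal))
          = α * -((μ ((fun ω => (S ω, U ω)) ⁻¹' {(s, u)})).toReal
              * L ((μ ((fun ω => (S ω, U ω)) ⁻¹' {(s, u)})).toReal))
            + (μ ((fun ω => (S ω, U ω)) ⁻¹' {(s, u)})).toReal * (-(α * L α)) := by
        intro u
        rw [hPsome s u]
        have := phi_mul α ((μ ((fun ω => (S ω, U ω)) ⁻¹' {(s, u)})).toReal)
        rw [hL]; linarith [this]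
      rw [Finset.sum_congr rfl (fun u _ => h2 u)]
    rw [Finset.sum_congr rfl (fun s _ => hinner s)]
    rw [Finset.sum_add_distrib, Finset.sum_add_distrib]
    rw [← Finset.mul_sum, ← Finset.sum_mul, hsumS]
    have hEntSU : ent μ (fun ω => (S ω, U ω)) = ∑ s : 𝒮, ∑ u : 𝒰,
        -((μ ((fun ω => (S ω, U ω)) ⁻¹' {(s, u)})).toReal
          * L ((μ ((fun ω => (S ω, U ω)) ⁻¹' {(s, u)})).toReal)) := by
      rw [ent, Fintype.sum_prod_type]
    have hsumSU2 := hsumSU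
    rw [Fintype.sum_prod_type] at hsumSU2
    have hsplit : ∑ s : 𝒮, ∑ u : 𝒰,
        (α * -((μ ((fun ω => (S ω, U ω)) ⁻¹' {(s, u)})).toReal
            * L ((μ ((fun ω => (S ω, U ω)) ⁻¹' {(s, u)})).toReal))
          + (μ ((fun ω => (S ω, U ω)) ⁻¹' {(s, u)})).toReal * (-(α * L α))) 
        = α * ent μ (fun ω => (S ω, U ω)) + 1 * (-(α * L α)) := by
      simp only [Finset.sum_add_distrib, ← Finset.mul_sum, ← Finset.sum_mul]
      rw [← hEntSU, hsumSU2]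
    rw [hsplit]
    have hES : ent μ S = ∑ s : 𝒮, -((μ (S ⁻¹' {s})).toReal * L ((μ (S ⁻¹' {s})).toReal)) := rfl
    rw [← hES]; ring
  rw [mutInf, mutInf, e1, e2]
  ring
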